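/- Let G be a simple graph on a vertex type V, let ω : V → V → ℝ satisfy ω j i = −(ω i j), and let Ω_S : V → V → V → ℝ be antisymmetric in its last two arguments and satisfy the square relations: for all pairwise distinct i, j, k, l with i adjacent to k and j adjacent to l, Ω_S i j l + Ω_S l i k + Ω_S k l j + Ω_S j k i = 0. For a finite set S of vertices and vertices u, v ∉ S, define Ω⁽ⁿ⁾(S, u, v) = ω u v + ∑_{w ∈ S} Ω_S w u v. Then for every finite set S ⊆ V and all pairwise distinct vertices i, j, k, l not in S with i adjacent to k and j adjacent to l, Ω⁽ⁿ⁾(S ∪ {i}, j, l) + Ω⁽ⁿ⁾(S ∪ {l}, i, k) + Ω⁽ⁿ⁾(S ∪ {k}, l, j) + Ω⁽ⁿ⁾(S ∪ {j}, k, i) = 0. -/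

import Mathlib

open Finset

/-- Given a one-particle (Aharonov–Bohm) gauge potential `ω` on a graph `G` and a
pure statistics 2-particle gauge potential `Ω_S` satisfying the square relations,
the `n`-particle gauge potential
`Ω⁽ⁿ⁾(S, u, v) = ω u v + ∑_{w ∈ S} Ω_S w u v`
has zero flux through every 2-cell of the `n`-particle combinatorial configuration
space, i.e. is a topological gauge potential. -/
theorem nParticle_gauge_potential_topological {V : Type*} [DecidableEq V]
    (G : SimpleGraph V)
    (ω : V → V → ℝ) (hω : ∀ i j, ω j i = -(ω i j))
    (ΩS : V → V → V → ℝ) (hA : ∀ i j k, ΩS i k j = -(ΩS i j k))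
    (hSq : ∀ i j k l : V, i ≠ j → i ≠ k → i ≠ l → j ≠ k → j ≠ l → k ≠ l →
      G.Adj i k → G.Adj j l →
      ΩS i j l + ΩS l i k + ΩS k l j + ΩS j k i = 0) :
    ∀ (S : Finset V) (i j k l : V), i ∉ S → j ∉ S → k ∉ S → l ∉ S →
      i ≠ j → i ≠ k → i ≠ l → j ≠ k → j ≠ l → k ≠ l →
      G.Adj i k → G.Adj j l →
      (ω j l + ∑ w ∈ insert i S, ΩS w j l) + (ω i k + ∑ w ∈ insert l S, ΩS w i k) +
      (ω l j + ∑ w ∈ insert k S, ΩS w l j) + (ω k i + ∑ w ∈ insert j S, ΩS w k i) = 0 := by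
  intro S i j k l hi hj hk hl hij hik hil hjk hjl hkl hik' hjl'
  rw [Finset.sum_insert hi, Finset.sum_insert hl, Finset.sum_insert hk, Finset.sum_insert hj]
  have e1 : ∑ x ∈ S, ΩS x l j = -(∑ x ∈ S, ΩS x j l) := by
    rw [← Finset.sum_neg_distrib]; exact Finset.sum_congr rfl fun w _ => hA w j l
  have e2 : ∑ x ∈ S, ΩS x k i = -(∑ x ∈ S, ΩS x i k) := by
    rw [← Finset.sum_neg_distrib]; exact Finset.sum_congr rfl fun w _ => hA w i k
  have := hSq i j k l hij hik hil hjk hjl hkl hik' hjl'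
  rw [hω l j, hω k i, e1, e2]
  linarith
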